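/- (The K-ideal is toric.) Let D = (V, A) be the directed graph of a finite simple graph G = (V,E), and let ℤ(D) be the cycle lattice: integer vectors z ∈ ℤ^A with z_{r(a)} = −z_a for all a and Σ_{w : v→w ∈ A} z_{v→w} = 0 for all v. In ℚ[P_a : a ∈ A], the K-ideal, i.e. the ideal generated by the cycle binomials P^{z(ω)⁺} − P^{z(ω)⁻} over all cycles ω of D, equals the lattice (toric) ideal generated by all binomials P^{z⁺} − P^{z⁻} with z ∈ ℤ(D). -/

import Mathlib

open Finset

/-- The arcs of the directed graph `D = (V, A)` associated to a simple graph `G`. -/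
abbrev Arc {V : Type*} (G : SimpleGraph V) : Type _ := {p : V × V // G.Adj p.1 p.2}

/-- The reversed arc. -/
def arcRev {V : Type*} {G : SimpleGraph V} (a : Arc G) : Arc G :=
  ⟨(a.1.2, a.1.1), a.2.symm⟩

/-- The cycle vector of a closed path `ω`: `+1` on the arcs of `ω`, `-1` on their reversals,
`0` elsewhere. -/
def cycVec {V : Type*} [DecidableEq V] (G : SimpleGraph V) {m : ℕ}
    (ω : Fin (m + 1) → V) (a : Arc G) : ℤ :=
  if ∃ i, (ω i, ω (i + 1)) = (a : V × V) then 1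
  else if ∃ i, (ω (i + 1), ω i) = (a : V × V) then -1 else 0

/- Auxiliary lemmas -/

lemma max_toNat (x : ℤ) : (max x 0).toNat = x.toNat := by
  rcases le_total x 0 with h | h
  · rw [max_eq_right h]; omega
  · rw [max_eq_left h]

lemma fin_val_add_one {m : ℕ} (hm : 2 ≤ m) (k : Fin (m + 1)) :
    ((k + 1 : Fin (m + 1)) : ℕ) = (k.val + 1) % (m + 1) := by
  rw [Fin.val_add, Fin.val_one', Nat.mod_eq_of_lt (show 1 < m + 1 by omega)]

lemma fin_add_two_ne {m : ℕ} (hm : 2 ≤ m) (i : Fin (m + 1)) : i + 1 + 1 ≠ i := by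
  intro h
  rw [add_assoc] at h
  have h3 : (1 + 1 : Fin (m + 1)) = 0 := by
    have : i + (1 + 1) = i + 0 := by rw [add_zero]; exact h
    exact add_left_cancel this
  have h4 := congrArg Fin.val h3
  rw [Fin.val_add, Fin.val_one'] at h4
  rw [Nat.mod_eq_of_lt (show 1 < m + 1 by omega)] at h4
  rw [Nat.mod_eq_of_lt (show 1 + 1 < m + 1 by omega)] at h4
  simp at h4

section
variable {V : Type*} [Fintype V] [DecidableEq V] {G : SimpleGraph V} [DecidableRel G.Adj]
variable {m : ℕ} {ω : Fin (m + 1) → V}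

omit [Fintype V] [DecidableEq V] [DecidableRel G.Adj] in
lemma not_fwd_and_bwd (hinj : Function.Injective ω) (hm : 2 ≤ m) (a : Arc G) :
    ¬((∃ i, (ω i, ω (i + 1)) = (a : V × V)) ∧ ∃ i, (ω (i + 1), ω i) = (a : V × V)) := by
  rintro ⟨⟨i, hi⟩, ⟨j, hj⟩⟩
  have h1 : ω i = ω (j + 1) := (congrArg Prod.fst hi).trans (congrArg Prod.fst hj).symm
  have h2 : ω (i + 1) = ω j := (congrArg Prod.snd hi).trans (congrArg Prod.snd hj).symm
  have e1 : i = j + 1 := hinj h1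
  have e2 : i + 1 = j := hinj h2
  exact fin_add_two_ne hm j (by rw [← e1]; exact e2)

omit [Fintype V] in
lemma cycVec_arcRev (hinj : Function.Injective ω) (hm : 2 ≤ m) (a : Arc G) :
    cycVec G ω (arcRev a) = - cycVec G ω a := by
  have hrev : ((arcRev a : Arc G) : V × V) = ((a : V × V).2, (a : V × V).1) := rfl
  have hF : (∃ i, (ω i, ω (i + 1)) = ((arcRev a : Arc G) : V × V)) ↔
      (∃ i, (ω (i + 1), ω i) = (a : V × V)) := by
    rw [hrev]
    constructor <;> rintro ⟨i, hi⟩ <;> exact ⟨i, by rw [Prod.ext_iff] at hi ⊢; exact ⟨hi.2, hi.1⟩⟩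
  have hB : (∃ i, (ω (i + 1), ω i) = ((arcRev a : Arc G) : V × V)) ↔
      (∃ i, (ω i, ω (i + 1)) = (a : V × V)) := by
    rw [hrev]
    constructor <;> rintro ⟨i, hi⟩ <;> exact ⟨i, by rw [Prod.ext_iff] at hi ⊢; exact ⟨hi.2, hi.1⟩⟩
  unfold cycVec
  by_cases h1 : ∃ i, (ω i, ω (i + 1)) = (a : V × V)
  · have h2 : ¬∃ i, (ω (i + 1), ω i) = (a : V × V) :=
      fun h => not_fwd_and_bwd hinj hm a ⟨h1, h⟩
    rw [if_pos h1, if_neg (hF.not.mpr h2), if_pos (hB.mpr h1)]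
  · by_cases h2 : ∃ i, (ω (i + 1), ω i) = (a : V × V)
    · rw [if_neg h1, if_pos h2, if_pos (hF.mpr h2)]
      norm_num
    · rw [if_neg h1, if_neg h2, if_neg (hF.not.mpr h2), if_neg (hB.not.mpr h1)]
      norm_num

lemma cycVec_flow (hadj : ∀ j, G.Adj (ω j) (ω (j + 1))) (hinj : Function.Injective ω)
    (hm : 2 ≤ m) (v : V) :
    ∑ a ∈ univ.filter (fun a : Arc G => (a : V × V).1 = v), cycVec G ω a = 0 := by
  by_cases hv : ∃ i, ω i = v
  · obtain ⟨i₀, hi₀⟩ := hv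
    have hWp : G.Adj v (ω (i₀ + 1)) := hi₀ ▸ hadj i₀
    have hWm : G.Adj v (ω (i₀ - 1)) := by
      have h := hadj (i₀ - 1)
      rw [sub_add_cancel, hi₀] at h
      exact h.symm
    have hpm : ω (i₀ + 1) ≠ ω (i₀ - 1) := by
      intro h
      have h2 := hinj h
      exact fin_add_two_ne hm (i₀ - 1) (by rw [sub_add_cancel, h2])
    set ap : Arc G := ⟨(v, ω (i₀ + 1)), hWp⟩ with hap
    set am : Arc G := ⟨(v, ω (i₀ - 1)), hWm⟩ with ham
    have hne : ap ≠ am := by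
      intro h
      exact hpm (congrArg (fun b : Arc G => (b : V × V).2) h)
    have hval : ∀ a ∈ univ.filter (fun a : Arc G => (a : V × V).1 = v),
        cycVec G ω a = (if a = ap then (1 : ℤ) else 0) + (if a = am then (-1 : ℤ) else 0) := by
      intro a ha
      have hav : (a : V × V).1 = v := (mem_filter.mp ha).2
      have hFi : ∀ i : Fin (m + 1), (ω i, ω (i + 1)) = (a : V × V) → a = ap := by
        intro i hi
        have hi1 : ω i = (a : V × V).1 := congrArg Prod.fst hi
        have hi2 : ω (i + 1) = (a : V × V).2 := congrArg Prod.snd hi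
        have : i = i₀ := hinj (by rw [hi1, hav, ← hi₀])
        apply Subtype.ext
        rw [hap]
        exact Prod.ext hav.symm (by rw [← hi2, this])|>.symm
      have hBi : ∀ i : Fin (m + 1), (ω (i + 1), ω i) = (a : V × V) → a = am := by
        intro i hi
        have hi1 : ω (i + 1) = (a : V × V).1 := congrArg Prod.fst hi
        have hi2 : ω i = (a : V × V).2 := congrArg Prod.snd hi
        have h3 : i + 1 = i₀ := hinj (by rw [hi1, hav, ← hi₀])
        have h4 : i = i₀ - 1 := by rw [← h3]; exact (add_sub_cancel_right i 1).symm
        apply Subtype.ext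
        rw [ham]
        exact Prod.ext hav.symm (by rw [← hi2, h4])|>.symm
      by_cases hPa : a = ap
      · have hMa : a ≠ am := hPa ▸ hne
        rw [if_pos hPa, if_neg hMa]
        unfold cycVec
        have hex : ∃ i, (ω i, ω (i + 1)) = (a : V × V) :=
          ⟨i₀, by rw [hPa, hap]; exact Prod.ext (by simpa using hi₀) (by simp)⟩
        rw [if_pos hex]
        norm_num
      · by_cases hMa : a = am
        · rw [if_neg hPa, if_pos hMa]
          unfold cycVec
          have hex : ∃ i, (ω (i + 1), ω i) = (a : V × V) :=
            ⟨i₀ - 1, by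
              rw [hMa, ham]
              exact Prod.ext (by simpa [sub_add_cancel] using hi₀) (by simp)⟩
          rw [if_neg fun ⟨i, hi⟩ => hPa (hFi i hi), if_pos hex]
          norm_num
        · rw [if_neg hPa, if_neg hMa]
          unfold cycVec
          rw [if_neg fun ⟨i, hi⟩ => hPa (hFi i hi), if_neg fun ⟨i, hi⟩ => hMa (hBi i hi)]
          norm_num
    rw [Finset.sum_congr rfl hval, Finset.sum_add_distrib,
      Finset.sum_ite_eq' _ ap (fun _ => (1 : ℤ)), Finset.sum_ite_eq' _ am (fun _ => (-1 : ℤ)),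
      if_pos (by simp [hap]), if_pos (by simp [ham])]
    norm_num
  · push_neg at hv
    apply Finset.sum_eq_zero
    intro a ha
    have hav : (a : V × V).1 = v := (mem_filter.mp ha).2
    unfold cycVec
    rw [if_neg fun ⟨i, hi⟩ => hv i ((congrArg Prod.fst hi).trans hav),
      if_neg fun ⟨i, hi⟩ => hv (i + 1) ((congrArg Prod.fst hi).trans hav)]

lemma exists_good_cycle {z : Arc G → ℤ}
    (hz1 : ∀ a, z (arcRev a) = - z a)
    (hz2 : ∀ v : V, (∑ a ∈ univ.filter (fun a : Arc G => (a : V × V).1 = v), z a) = 0)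
    (a₀ : Arc G) (ha₀ : 0 < z a₀) :
    ∃ (m : ℕ) (ω : Fin (m + 1) → V),
      (∀ j, G.Adj (ω j) (ω (j + 1))) ∧ Function.Injective ω ∧ 2 ≤ m ∧
      (∀ a : Arc G, (∃ i, (ω i, ω (i + 1)) = (a : V × V)) → 0 < z a) ∧
      (∀ a : Arc G, (∃ i, (ω (i + 1), ω i) = (a : V × V)) → z a < 0) := by
  classical
  have step : ∀ a : Arc G, 0 < z a → ∃ b : Arc G, (b : V × V).1 = (a : V × V).2 ∧ 0 < z b := by
    intro a ha
    by_contra hcon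
    push_neg at hcon
    have hmem : arcRev a ∈ univ.filter (fun b : Arc G => (b : V × V).1 = (a : V × V).2) := by
      simp [arcRev]
    have hlt : ∑ b ∈ univ.filter (fun b : Arc G => (b : V × V).1 = (a : V × V).2), z b <
        ∑ b ∈ univ.filter (fun b : Arc G => (b : V × V).1 = (a : V × V).2), (0 : ℤ) := by
      apply Finset.sum_lt_sum
      · intro b hb
        exact hcon b (mem_filter.mp hb).2
      · exact ⟨arcRev a, hmem, by rw [hz1 a]; omega⟩
    rw [hz2 ((a : V × V).2), Finset.sum_const, smul_zero] at hlt
    exact absurd hlt (lt_irrefl 0)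
  choose g hg1 hg2 using step
  set G' : {a : Arc G // 0 < z a} → {a : Arc G // 0 < z a} :=
    fun p => ⟨g p.1 p.2, hg2 p.1 p.2⟩ with hG'
  set f : ℕ → {a : Arc G // 0 < z a} := fun n => G'^[n] ⟨a₀, ha₀⟩ with hf
  set vtx : ℕ → V := fun n => ((f n : Arc G) : V × V).1 with hvtx
  have hfs : ∀ n, f (n + 1) = G' (f n) := by
    intro n
    rw [hf]
    exact Function.iterate_succ_apply' G' n _
  have hpair : ∀ n, ((f n : Arc G) : V × V) = (vtx n, vtx (n + 1)) := by
    intro n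
    refine Prod.ext rfl ?_
    show ((f n : Arc G) : V × V).2 = ((f (n+1) : Arc G) : V × V).1
    rw [hfs n]
    exact (hg1 (f n).1 (f n).2).symm
  have hzf : ∀ n, 0 < z (f n) := fun n => (f n).2
  have hadjn : ∀ n, G.Adj (vtx n) (vtx (n + 1)) := by
    intro n
    have h := ((f n : Arc G)).2
    rw [hpair n] at h
    exact h
  have hex : ∃ n, ∃ i < n, vtx i = vtx n := by
    obtain ⟨x, y, hxy, hvv⟩ := Finite.exists_ne_map_eq_of_infinite vtx
    rcases Nat.lt_or_gt_of_ne hxy with h | h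
    · exact ⟨y, x, h, hvv⟩
    · exact ⟨x, y, h, hvv.symm⟩
  set j₀ := Nat.find hex with hj₀
  obtain ⟨i₀, hi₀lt, hi₀eq⟩ := Nat.find_spec hex
  have hmin : ∀ q, q < j₀ → ¬∃ i < q, vtx i = vtx q := fun q hq => Nat.find_min hex hq
  have injOn : ∀ p q, p < j₀ → q < j₀ → vtx p = vtx q → p = q := by
    intro p q hp hq h
    rcases Nat.lt_trichotomy p q with h1 | h1 | h1
    · exact absurd ⟨p, h1, h⟩ (hmin q hq)
    · exact h1
    · exact absurd ⟨q, h1, h.symm⟩ (hmin p hp)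
  set L := j₀ - i₀ with hLdef
  have hL0 : i₀ + L = j₀ := by omega
  have hL1 : L ≠ 1 := by
    intro h
    have : vtx i₀ = vtx (i₀ + 1) := by rw [show i₀ + 1 = j₀ by omega]; exact hi₀eq
    exact (hadjn i₀).ne this
  have hL2 : L ≠ 2 := by
    intro h
    have he : vtx (i₀ + 2) = vtx i₀ := by rw [show i₀ + 2 = j₀ by omega]; exact hi₀eq.symm
    have harr : ((f (i₀ + 1) : Arc G) : V × V) = ((arcRev (f i₀ : Arc G) : Arc G) : V × V) := by
      rw [hpair (i₀ + 1)]
      show (vtx (i₀ + 1), vtx (i₀ + 2)) = (((f i₀ : Arc G) : V × V).2, ((f i₀ : Arc G) : V × V).1)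
      rw [hpair i₀, he]
    have : (f (i₀ + 1) : Arc G) = arcRev (f i₀ : Arc G) := Subtype.ext harr
    have h1 := hzf (i₀ + 1)
    rw [this, hz1] at h1
    have h2 := hzf i₀
    omega
  have hL3 : 3 ≤ L := by omega
  set m := L - 1 with hmdef
  have hm : 2 ≤ m := by omega
  have hmL : m + 1 = L := by omega
  set ω : Fin (m + 1) → V := fun k => vtx (i₀ + k.val) with hω
  have hlt' : ∀ k : Fin (m + 1), i₀ + k.val < j₀ := by
    intro k
    have := k.is_lt
    omega
  have hinj : Function.Injective ω := by
    intro k l h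
    have := injOn (i₀ + k.val) (i₀ + l.val) (hlt' k) (hlt' l) h
    exact Fin.ext (by omega)
  have hkey : ∀ k : Fin (m + 1), (ω k, ω (k + 1)) = ((f (i₀ + k.val) : Arc G) : V × V) := by
    intro k
    rw [hpair (i₀ + k.val)]
    refine Prod.ext rfl ?_
    show ω (k + 1) = vtx (i₀ + k.val + 1)
    rw [hω]
    show vtx (i₀ + ((k + 1 : Fin (m+1)) : ℕ)) = vtx (i₀ + k.val + 1)
    rw [fin_val_add_one hm k]
    rcases Nat.lt_or_ge (k.val + 1) (m + 1) with h | h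
    · rw [Nat.mod_eq_of_lt h]
      ring_nf
    · have hk : k.val = m := by have := k.is_lt; omega
      rw [hk, Nat.mod_self]
      show vtx (i₀ + 0) = vtx (i₀ + m + 1)
      rw [Nat.add_zero, show i₀ + m + 1 = j₀ by omega]
      exact hi₀eq
  have hadjω : ∀ k : Fin (m + 1), G.Adj (ω k) (ω (k + 1)) := by
    intro k
    have h := ((f (i₀ + k.val) : Arc G)).2
    rw [← hkey k] at h
    exact h
  refine ⟨m, ω, hadjω, hinj, hm, ?_, ?_⟩
  · rintro a ⟨i, hi⟩
    have : a = (f (i₀ + i.val) : Arc G) := Subtype.ext (by rw [← hi, hkey i])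
    rw [this]
    exact hzf _
  · rintro a ⟨i, hi⟩
    have hsw : (a : V × V) = ((arcRev (f (i₀ + i.val) : Arc G) : Arc G) : V × V) := by
      show (a : V × V) = (((f (i₀ + i.val) : Arc G) : V × V).2, ((f (i₀ + i.val) : Arc G) : V × V).1)
      rw [← hkey i, ← hi]
    have : a = arcRev (f (i₀ + i.val) : Arc G) := Subtype.ext hsw
    rw [this, hz1]
    have := hzf (i₀ + i.val)
    omega

lemma lattice_binomial_mem (G : SimpleGraph V) [DecidableRel G.Adj] :
    ∀ (n : ℕ) (z : Arc G → ℤ),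
    (∀ a, z (arcRev a) = - z a) →
    (∀ v : V, (∑ a ∈ univ.filter (fun a : Arc G => (a : V × V).1 = v), z a) = 0) →
    (∑ a : Arc G, (z a).toNat) = n →
    ((∏ a : Arc G, MvPolynomial.X a ^ (max (z a) 0).toNat)
      - ∏ a : Arc G, MvPolynomial.X a ^ (max (- z a) 0).toNat : MvPolynomial (Arc G) ℚ) ∈
    Ideal.span {f : MvPolynomial (Arc G) ℚ |
      ∃ (m : ℕ) (ω : Fin (m + 1) → V),
        (∀ j, G.Adj (ω j) (ω (j + 1))) ∧ Function.Injective ω ∧ 2 ≤ m ∧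
        f = (∏ a : Arc G, MvPolynomial.X a ^ (max (cycVec G ω a) 0).toNat)
          - ∏ a : Arc G, MvPolynomial.X a ^ (max (- cycVec G ω a) 0).toNat} := by
  intro n
  induction n using Nat.strong_induction_on with
  | _ n ih =>
    intro z hz1 hz2 hn
    by_cases hpos : ∃ a, 0 < z a
    · obtain ⟨a₀, ha₀⟩ := hpos
      obtain ⟨m, ω, hadj, hinj, hm, hfwd, hbwd⟩ := exists_good_cycle hz1 hz2 a₀ ha₀
      set c : Arc G → ℤ := cycVec G ω with hc
      have hcval : ∀ a, c a = 1 ∨ c a = 0 ∨ c a = -1 := by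
        intro a
        rw [hc]
        unfold cycVec
        split_ifs <;> simp
      have hc1 : ∀ a, c a = 1 → 1 ≤ z a := by
        intro a h
        by_cases h1 : ∃ i, (ω i, ω (i + 1)) = (a : V × V)
        · have := hfwd a h1; omega
        · rw [hc] at h
          unfold cycVec at h
          rw [if_neg h1] at h
          by_cases h2 : ∃ i, (ω (i + 1), ω i) = (a : V × V)
          · rw [if_pos h2] at h; exact absurd h (by norm_num)
          · rw [if_neg h2] at h; exact absurd h (by norm_num)
      have hcm1 : ∀ a, c a = -1 → z a ≤ -1 := by
        intro a h
        by_cases h2 : ∃ i, (ω (i + 1), ω i) = (a : V × V)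
        · have := hbwd a h2; omega
        · rw [hc] at h
          unfold cycVec at h
          by_cases h1 : ∃ i, (ω i, ω (i + 1)) = (a : V × V)
          · rw [if_pos h1] at h; exact absurd h (by norm_num)
          · rw [if_neg h1, if_neg h2] at h; exact absurd h (by norm_num)
      have hdecomp : ∀ a : Arc G, (z a).toNat = (z a - c a).toNat + (c a).toNat ∧
          (-(z a)).toNat = (-(z a - c a)).toNat + (-(c a)).toNat := by
        intro a
        rcases hcval a with h | h | h
        · have := hc1 a h; rw [h]; constructor <;> omega
        · rw [h]; constructor <;> omega
        · have := hcm1 a h; rw [h]; constructor <;> omega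
      set z' : Arc G → ℤ := fun a => z a - c a with hz'
      have hz'1 : ∀ a, z' (arcRev a) = - z' a := by
        intro a
        simp only [hz']
        rw [hz1 a, hc, cycVec_arcRev hinj hm a]
        ring
      have hz'2 : ∀ v : V, (∑ a ∈ univ.filter (fun a : Arc G => (a : V × V).1 = v), z' a) = 0 := by
        intro v
        simp only [hz']
        rw [Finset.sum_sub_distrib, hz2 v, hc, cycVec_flow hadj hinj hm v, sub_zero]
      set a₁ : Arc G := ⟨(ω 0, ω (0 + 1)), hadj 0⟩ with ha₁
      have hca₁ : c a₁ = 1 := by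
        rw [hc]
        unfold cycVec
        rw [if_pos ⟨0, rfl⟩]
      have hlt : (∑ a : Arc G, (z' a).toNat) < n := by
        rw [← hn]
        apply Finset.sum_lt_sum
        · intro a _
          have := (hdecomp a).1
          simp only [hz']
          omega
        · refine ⟨a₁, mem_univ _, ?_⟩
          have h1 := hc1 a₁ hca₁
          have h2 := (hdecomp a₁).1
          simp only [hz']
          omega
      have Hih := ih _ hlt z' hz'1 hz'2 rfl
      have hgen : ((∏ a : Arc G, MvPolynomial.X a ^ (max (c a) 0).toNat)
          - ∏ a : Arc G, MvPolynomial.X a ^ (max (- c a) 0).toNat : MvPolynomial (Arc G) ℚ) ∈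
          Ideal.span {f : MvPolynomial (Arc G) ℚ |
            ∃ (m : ℕ) (ω : Fin (m + 1) → V),
              (∀ j, G.Adj (ω j) (ω (j + 1))) ∧ Function.Injective ω ∧ 2 ≤ m ∧
              f = (∏ a : Arc G, MvPolynomial.X a ^ (max (cycVec G ω a) 0).toNat)
                - ∏ a : Arc G, MvPolynomial.X a ^ (max (- cycVec G ω a) 0).toNat} :=
        Ideal.subset_span ⟨m, ω, hadj, hinj, hm, rfl⟩
      have e1 : (∏ a : Arc G, MvPolynomial.X a ^ (max (z a) 0).toNat : MvPolynomial (Arc G) ℚ) =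
          (∏ a : Arc G, MvPolynomial.X a ^ (max (z' a) 0).toNat) *
          ∏ a : Arc G, MvPolynomial.X a ^ (max (c a) 0).toNat := by
        rw [← Finset.prod_mul_distrib]
        apply Finset.prod_congr rfl
        intro a _
        rw [← pow_add]
        congr 1
        rw [max_toNat, max_toNat, max_toNat]
        exact (hdecomp a).1
      have e2 : (∏ a : Arc G, MvPolynomial.X a ^ (max (- z a) 0).toNat : MvPolynomial (Arc G) ℚ) =
          (∏ a : Arc G, MvPolynomial.X a ^ (max (- z' a) 0).toNat) *
          ∏ a : Arc G, MvPolynomial.X a ^ (max (- c a) 0).toNat := by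
        rw [← Finset.prod_mul_distrib]
        apply Finset.prod_congr rfl
        intro a _
        rw [← pow_add]
        congr 1
        rw [max_toNat, max_toNat, max_toNat]
        exact (hdecomp a).2
      rw [e1, e2]
      have hring : ∀ A A' B B' : MvPolynomial (Arc G) ℚ,
          A * B - A' * B' = A * (B - B') + B' * (A - A') := by intros; ring
      rw [hring]
      exact add_mem (Ideal.mul_mem_left _ _ hgen) (Ideal.mul_mem_left _ _ Hih)
    · push_neg at hpos
      have hz0 : ∀ a, z a = 0 := by
        intro a
        have h1 := hpos a
        have h2 := hpos (arcRev a)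
        rw [hz1 a] at h2
        omega
      have : ∀ a : Arc G, (max (z a) 0).toNat = (max (- z a) 0).toNat := by
        intro a; rw [hz0 a]; norm_num
      rw [show (∏ a : Arc G, MvPolynomial.X a ^ (max (z a) 0).toNat : MvPolynomial (Arc G) ℚ)
          = ∏ a : Arc G, MvPolynomial.X a ^ (max (- z a) 0).toNat from
        Finset.prod_congr rfl fun a _ => by rw [this a]]
      rw [sub_self]
      exact Ideal.zero_mem _

end

/-- the K-ideal is toric: in `ℚ[P_a : a ∈ A]`, the ideal generated by the cycle
binomials `P^{z(ω)⁺} − P^{z(ω)⁻}` equals the lattice ideal generated by all the binomials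
`P^{z⁺} − P^{z⁻}`, `z ∈ ℤ(D)`. -/
theorem stmt_13 {V : Type*} [Fintype V] [DecidableEq V]
    (G : SimpleGraph V) [DecidableRel G.Adj] :
    Ideal.span {f : MvPolynomial (Arc G) ℚ |
      ∃ (m : ℕ) (ω : Fin (m + 1) → V),
        (∀ j, G.Adj (ω j) (ω (j + 1))) ∧ Function.Injective ω ∧ 2 ≤ m ∧
        f = (∏ a : Arc G, MvPolynomial.X a ^ (max (cycVec G ω a) 0).toNat)
          - ∏ a : Arc G, MvPolynomial.X a ^ (max (- cycVec G ω a) 0).toNat} =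
    Ideal.span {f : MvPolynomial (Arc G) ℚ |
      ∃ z : Arc G → ℤ,
        (∀ a, z (arcRev a) = - z a) ∧
        (∀ v : V, (∑ a ∈ univ.filter (fun a : Arc G => (a : V × V).1 = v), z a) = 0) ∧
        f = (∏ a : Arc G, MvPolynomial.X a ^ (max (z a) 0).toNat)
          - ∏ a : Arc G, MvPolynomial.X a ^ (max (- z a) 0).toNat} := by
  apply le_antisymm
  · rw [Ideal.span_le]
    rintro f ⟨m, ω, hadj, hinj, hm, rfl⟩
    exact Ideal.subset_span
      ⟨cycVec G ω, fun a => cycVec_arcRev hinj hm a, cycVec_flow hadj hinj hm, rfl⟩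
  · rw [Ideal.span_le]
    rintro f ⟨z, h1, h2, rfl⟩
    exact lattice_binomial_mem G _ z h1 h2 rfl
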